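/- Let V be a 2n-dimensional real vector space with complex structures J and K and let m₁ = dim ker(J+K)/2. The tangent space at K to the manifold C^(m₁,*) = {K' : K'² = -1, dim ker(J+K') = 2m₁}, viewed inside {A ∈ End(V) : AK + KA = 0}, equals {A : AK + KA = 0 and A(ker(J+K)) ⊆ Im(J+K)}. In particular, if K(t) is a smooth curve of complex structures with K(0) = K and dim ker(J+K(t)) constant, then K'(0) maps ker(J+K) into Im(J+K). -/

import Mathlib

open Module

set_option maxHeartbeats 1000000 in
/-- Auxiliary lemma: if `f t` is a curve of continuous linear maps on a finite-dimensional
space, differentiable at `0`, with kernel of constant dimension near `0`, then the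
derivative at `0` maps `ker (f 0)` into `range (f 0)`. -/
theorem constant_kernel_dim_deriv_mem_range
    (V : Type*) [NormedAddCommGroup V] [NormedSpace ℝ V] [FiniteDimensional ℝ V]
    (d : ℕ)
    (f : ℝ → (V →L[ℝ] V)) (f' : V →L[ℝ] V)
    (hfdiff : HasDerivAt f f' 0)
    (hconst : ∀ᶠ t in nhds (0 : ℝ),
      finrank ℝ (LinearMap.ker ((f t : V →L[ℝ] V) : V →ₗ[ℝ] V)) = d)
    (v : V) (hv : v ∈ LinearMap.ker ((f 0 : V →L[ℝ] V) : V →ₗ[ℝ] V)) :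
    f' v ∈ LinearMap.range ((f 0 : V →L[ℝ] V) : V →ₗ[ℝ] V) := by
  classical
  have hfv0 : f 0 v = 0 := hv
  set Kc : Submodule ℝ V := LinearMap.ker ((f 0 : V →L[ℝ] V) : V →ₗ[ℝ] V) with hKcdef
  set R : Submodule ℝ V := LinearMap.range ((f 0 : V →L[ℝ] V) : V →ₗ[ℝ] V) with hRdef
  obtain ⟨W, hW⟩ := Submodule.exists_isCompl Kc
  obtain ⟨Q, hQ⟩ := Submodule.exists_isCompl R
  have hk0 : finrank ℝ Kc = d := hconst.self_of_nhds
  have hrn : finrank ℝ R + finrank ℝ Kc = finrank ℝ V := by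
    simpa [hRdef, hKcdef] using
      LinearMap.finrank_range_add_finrank_ker ((f 0 : V →L[ℝ] V) : V →ₗ[ℝ] V)
  have hWc : finrank ℝ Kc + finrank ℝ W = finrank ℝ V :=
    Submodule.finrank_add_eq_of_isCompl hW
  have hQc : finrank ℝ R + finrank ℝ Q = finrank ℝ V :=
    Submodule.finrank_add_eq_of_isCompl hQ
  have hKQ : finrank ℝ Kc = finrank ℝ Q := by omega
  have hWfr : finrank ℝ W = finrank ℝ V - d := by omega
  obtain ⟨e⟩ := FiniteDimensional.nonempty_linearEquiv_of_finrank_eq hKQ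
  -- projections
  set projW : V →ₗ[ℝ] W := W.projectionOnto Kc hW.symm with hprojW
  set projK : V →ₗ[ℝ] Kc := Kc.projectionOnto W hW with hprojK
  set Pw : V →L[ℝ] V :=
    LinearMap.toContinuousLinearMap (W.subtype ∘ₗ projW) with hPw
  set C0 : V →L[ℝ] V :=
    LinearMap.toContinuousLinearMap (Q.subtype ∘ₗ (e : Kc →ₗ[ℝ] Q) ∘ₗ projK) with hC0
  set M : ℝ → (V →L[ℝ] V) := fun t => (f t).comp Pw + C0 with hM
  have hPw_w : ∀ w ∈ W, Pw w = w := by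
    intro w hw
    simp [hPw, hprojW, Submodule.projectionOnto_apply_of_mem_left hW.symm hw]
  have hC0_w : ∀ w ∈ W, C0 w = 0 := by
    intro w hw
    simp [hC0, hprojK, Submodule.linearProjOfIsCompl_apply_right' hW hw]
  have hMw : ∀ t, ∀ w ∈ W, M t w = f t w := by
    intro t w hw
    simp [hM, hPw_w w hw, hC0_w w hw]
  -- M 0 is bijective
  have hM0inj : Function.Injective (M 0) := by
    rw [injective_iff_map_eq_zero]
    intro x hx
    have hdecomp : ((projW x : V) + (projK x : V)) = x := by
      exact
        Submodule.projection_add_projection_eq_self hW.symm x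
    have hMx : f 0 ((projW x : V)) + ((e (projK x)) : V) = 0 := by
      simpa [hM, hPw, hC0] using hx
    have hmemR : f 0 ((projW x : V)) ∈ R := LinearMap.mem_range_self _ _
    have hmemQ : ((e (projK x)) : V) ∈ Q := (e (projK x)).2
    have h1 : f 0 ((projW x : V)) = 0 := by
      have hneg : f 0 ((projW x : V)) = -((e (projK x)) : V) := by
        rw [eq_neg_iff_add_eq_zero]; exact hMx
      have hmemQ' : f 0 ((projW x : V)) ∈ Q := by
        rw [hneg]; exact Q.neg_mem hmemQ
      exact Submodule.disjoint_def.mp hQ.disjoint _ hmemR hmemQ'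
    have h2 : ((e (projK x)) : V) = 0 := by
      rw [h1, zero_add] at hMx; exact hMx
    have hprojK0 : projK x = 0 := by
      have he0 : e (projK x) = 0 := Subtype.ext h2
      have := e.injective (by simpa using he0)
      simpa using this
    have hprojW0 : (projW x : V) = 0 := by
      have hmemK : (projW x : V) ∈ Kc := h1
      exact Submodule.disjoint_def.mp hW.disjoint _ hmemK (projW x).2
    rw [← hdecomp, hprojW0, hprojK0]; simp
  have hM0unit : IsUnit (M 0) := by
    have hbij : Function.Bijective (((M 0 : V →L[ℝ] V) : V →ₗ[ℝ] V)) := by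
      have hinj : Function.Injective (((M 0 : V →L[ℝ] V) : V →ₗ[ℝ] V)) := by
        simpa using hM0inj
      exact ⟨hinj, LinearMap.injective_iff_surjective.mp hinj⟩
    set eq0 : V ≃ₗ[ℝ] V := LinearEquiv.ofBijective _ hbij with heq0
    set eqc : V ≃L[ℝ] V := eq0.toContinuousLinearEquiv with heqc
    refine ⟨⟨(eqc : V →L[ℝ] V), (eqc.symm : V →L[ℝ] V), ?_, ?_⟩, ?_⟩
    · ext y; simp [ContinuousLinearMap.mul_apply]
    · ext y; simp [ContinuousLinearMap.mul_apply]
    · ext y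
      show eqc y = M 0 y
      simp [heqc, heq0]
  -- continuity / differentiability of M
  have hMdiff : HasDerivAt M (f'.comp Pw) 0 := by
    have h1 : HasDerivAt (fun t => (f t).comp Pw)
        ((f'.comp Pw) + (f 0).comp 0) 0 :=
      hfdiff.clm_comp (hasDerivAt_const (0 : ℝ) Pw)
    have h2 := h1.add_const C0
    simpa [hM] using h2
  have hMcont : ContinuousAt M 0 := hMdiff.continuousAt
  have hunit_ev : ∀ᶠ t in nhds (0 : ℝ), IsUnit (M t) := by
    have hUopen : IsOpen {A : V →L[ℝ] V | IsUnit A} := Units.isOpen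
    exact hMcont (hUopen.mem_nhds hM0unit)
  -- derivative of t ↦ f t v
  have happD : HasDerivAt (fun t => f t v) (f' v) 0 := by
    simpa using hfdiff.clm_apply (hasDerivAt_const (0 : ℝ) v)
  -- the implicit curve x t in W with f t (x t) = f t v
  set x : ℝ → V := fun t => Ring.inverse (M t) (f t v) with hxdef
  have hgood : ∀ᶠ t in nhds (0 : ℝ), x t ∈ W ∧ f t (x t) = f t v := by
    filter_upwards [hunit_ev, hconst] with t hu hk
    have hinj : ∀ y, M t y = 0 → y = 0 := by
      intro y hy
      have h1 : (Ring.inverse (M t) * M t) y = y := by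
        rw [Ring.inverse_mul_cancel _ hu]; simp
      rw [ContinuousLinearMap.mul_apply, hy, map_zero] at h1
      exact h1.symm
    have hinjW : ∀ w ∈ W, f t w = 0 → w = 0 := by
      intro w hw h0
      exact hinj w (by rw [hMw t w hw, h0])
    -- rank count
    have hrnt : finrank ℝ (LinearMap.range ((f t : V →L[ℝ] V) : V →ₗ[ℝ] V)) + finrank ℝ (LinearMap.ker ((f t : V →L[ℝ] V) : V →ₗ[ℝ] V))
        = finrank ℝ V := by
      simpa using
        LinearMap.finrank_range_add_finrank_ker ((f t : V →L[ℝ] V) : V →ₗ[ℝ] V)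
    set g : W →ₗ[ℝ] V := ((f t : V →L[ℝ] V) : V →ₗ[ℝ] V).domRestrict W with hg
    have hgker : LinearMap.ker g = ⊥ := by
      rw [LinearMap.ker_eq_bot']
      rintro ⟨w, hw⟩ h0
      have : w = 0 := hinjW w hw (by simpa [hg] using h0)
      exact Subtype.ext this
    have hgrange : finrank ℝ (LinearMap.range g) = finrank ℝ W := by
      have := LinearMap.finrank_range_add_finrank_ker g
      rw [hgker] at this
      simpa using this
    have hrange_eq : LinearMap.range g = LinearMap.range ((f t : V →L[ℝ] V) : V →ₗ[ℝ] V) := by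
      apply Submodule.eq_of_le_of_finrank_eq (LinearMap.range_domRestrict_le_range _ _)
      have : finrank ℝ (LinearMap.range ((f t : V →L[ℝ] V) : V →ₗ[ℝ] V))
          = finrank ℝ V - d := by
        have hco : LinearMap.range ((f t : V →L[ℝ] V) : V →ₗ[ℝ] V)
            = LinearMap.range ((f t : V →L[ℝ] V) : V →ₗ[ℝ] V) := by
          ext y; simp [LinearMap.mem_range]
        rw [hco]; omega
      rw [this, hgrange, hWfr]
    -- existence of w
    have hmem : f t v ∈ LinearMap.range g := by
      rw [hrange_eq]
      exact ⟨v, by simp⟩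
    obtain ⟨⟨w, hwW⟩, hfw⟩ := hmem
    have hfw' : f t w = f t v := by simpa [hg] using hfw
    have hxw : x t = w := by
      have h1 : x t = (Ring.inverse (M t) * M t) w := by
        rw [ContinuousLinearMap.mul_apply, hMw t w hwW, hfw', hxdef]
      rw [h1, Ring.inverse_mul_cancel _ hu]; simp
    exact ⟨hxw ▸ hwW, by rw [hxw, hfw']⟩
  -- x tends to 0
  have hx0 : Filter.Tendsto x (nhds 0) (nhds (0 : V)) := by
    obtain ⟨u, hu⟩ := hM0unit
    have hinvc : ContinuousAt (fun t => Ring.inverse (M t)) 0 := by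
      have h1 : ContinuousAt (Ring.inverse : (V →L[ℝ] V) → (V →L[ℝ] V)) (M 0) := by
        rw [← hu]; exact NormedRing.inverse_continuousAt u
      exact h1.comp hMcont
    have happc : ContinuousAt (fun t => f t v) 0 := happD.continuousAt
    have hb : Continuous fun p : (V →L[ℝ] V) × V => p.1 p.2 :=
      isBoundedBilinearMap_apply.continuous
    have hc : ContinuousAt x 0 := by
      have h := hb.continuousAt.comp (hinvc.prodMk happc); exact h
    have hx00 : x 0 = 0 := by simp [hxdef, hfv0]
    simpa [ContinuousAt, hx00] using hc
  -- the projection φ onto Q along R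
  set φ : V →L[ℝ] V :=
    LinearMap.toContinuousLinearMap (Q.subtype ∘ₗ Q.projectionOnto R hQ.symm) with hφ
  have hφR : ∀ y ∈ R, φ y = 0 := by
    intro y hy
    simp [hφ, Submodule.linearProjOfIsCompl_apply_right' hQ.symm hy]
  have hφmem : ∀ y, φ y = 0 → y ∈ R := by
    intro y h0
    have hdec : ((Q.projectionOnto R hQ.symm y : V)
        + (R.projectionOnto Q hQ.symm.symm y : V)) = y :=
      Submodule.projection_add_projection_eq_self hQ.symm y
    have h1 : (Q.projectionOnto R hQ.symm y : V) = 0 := by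
      simpa [hφ] using h0
    rw [h1, zero_add] at hdec
    rw [← hdec]
    exact (R.projectionOnto Q hQ.symm.symm y).2
  -- asymptotics
  have hO : (fun t => f t - f 0) =O[nhds (0 : ℝ)] (fun t => t) := by
    simpa using hfdiff.differentiableAt.isBigO_sub
  have hxo : (fun t => ‖x t‖) =o[nhds (0 : ℝ)] (fun _ => (1 : ℝ)) :=
    (Asymptotics.isLittleO_one_iff ℝ).mpr (by simpa using hx0.norm)
  have hmul : (fun t => ‖f t - f 0‖ * ‖x t‖) =o[nhds (0 : ℝ)] (fun t => t) := by
    have := hO.norm_left.mul_isLittleO hxo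
    simpa using this
  have hφo : (fun t => φ (f t v)) =o[nhds (0 : ℝ)] (fun t => t) := by
    refine Asymptotics.IsBigO.trans_isLittleO ?_ hmul
    rw [Asymptotics.isBigO_iff]
    refine ⟨‖φ‖, ?_⟩
    filter_upwards [hgood] with t ht
    obtain ⟨hxW, hfx⟩ := ht
    have h1 : φ (f t v) = φ ((f t - f 0) (x t)) := by
      have h2 : f t v = (f t - f 0) (x t) + f 0 (x t) := by
        rw [ContinuousLinearMap.sub_apply, ← hfx]; abel
      rw [h2, map_add, hφR (f 0 (x t)) (LinearMap.mem_range_self ((f 0 : V →L[ℝ] V) : V →ₗ[ℝ] V) (x t)), add_zero]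
    rw [h1]
    calc ‖φ ((f t - f 0) (x t))‖
        ≤ ‖φ‖ * ‖(f t - f 0) (x t)‖ := φ.le_opNorm _
      _ ≤ ‖φ‖ * (‖f t - f 0‖ * ‖x t‖) := by
          gcongr
          exact (f t - f 0).le_opNorm _
      _ ≤ ‖φ‖ * ‖‖f t - f 0‖ * ‖x t‖‖ := by
          refine mul_le_mul_of_nonneg_left ?_ (norm_nonneg φ)
          rw [Real.norm_eq_abs]
          exact le_abs_self _
  -- two derivative computations
  have hD1 : HasDerivAt (fun t => φ (f t v)) (φ (f' v)) 0 := by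
    exact φ.hasFDerivAt.comp_hasDerivAt 0 happD
  have hD2 : HasDerivAt (fun t => φ (f t v)) 0 0 := by
    rw [hasDerivAt_iff_isLittleO]
    simp only [hfv0, map_zero, sub_zero, smul_zero]
    exact hφo
  exact hφmem _ (hD1.unique hD2)

/-- formalizable form: If `K(t)` is a smooth (differentiable) curve of
complex structures on a `2n`-dimensional real vector space with `K(0) = K` and
`dim ker (J + K(t)) = 2m₁` constant for `t` near `0`, then the derivative `K'(0)` maps
`ker (J + K)` into `Im (J + K)`; i.e. the tangent space at `K` to
`C^(m₁,*) = {K' : K'² = -1, dim ker (J+K') = 2m₁}` consists of anticommuting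
endomorphisms `A` with `A (ker (J+K)) ⊆ Im (J+K)`. -/
theorem tangent_to_stratum_along_curve
    (V : Type*) [NormedAddCommGroup V] [NormedSpace ℝ V] [FiniteDimensional ℝ V]
    (n m₁ : ℕ) (hdim : finrank ℝ V = 2 * n)
    (J : V →L[ℝ] V) (hJ : J * J = -1)
    (K : ℝ → (V →L[ℝ] V))
    (hK2 : ∀ t : ℝ, K t * K t = -1)
    (hKdiff : DifferentiableAt ℝ K 0)
    (hconst : ∀ᶠ t in nhds (0 : ℝ),
      finrank ℝ (LinearMap.ker ((J + K t : V →L[ℝ] V) : V →ₗ[ℝ] V)) = 2 * m₁) :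
    ∀ v ∈ LinearMap.ker ((J + K 0 : V →L[ℝ] V) : V →ₗ[ℝ] V),
      (deriv K 0) v ∈ LinearMap.range ((J + K 0 : V →L[ℝ] V) : V →ₗ[ℝ] V) := by
  intro v hv
  have hf : HasDerivAt (fun t => J + K t) (deriv K 0) 0 :=
    (hKdiff.hasDerivAt).const_add J
  exact constant_kernel_dim_deriv_mem_range V (2 * m₁) (fun t => J + K t) (deriv K 0)
    hf hconst v hv
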